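/- Let f : ℝ → ℝ be defined by f(x) = x/(1 + |x|), and regard [−1,1]² with the sup metric d̄ of the Euclidean metric on each factor as a compactification of ℝ² via the embedding f × f. Then [−1,1]² is NOT a controlled compactification of ℝ² with the Euclidean metric: there exist ε > 0 and R > 0 such that for every compact set C ⊆ ℝ² there is a subset B ⊆ ℝ² \ C of Euclidean diameter less than R with diam_{d̄}((f × f)(B)) ≥ ε. -/

import Mathlib

/-!
Statement 9: The product compactification `[-1,1]²` of the Euclidean plane (applying
`x ↦ x/(1+|x|)` in each coordinate, with the sup metric on the square) is NOT a
controlled compactification of `ℝ²` with the Euclidean metric.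
-/

/-- For the map `F(x) = (f(x₀), f(x₁))` with `f(t) = t/(1+|t|)`, from the
Euclidean plane `EuclideanSpace ℝ (Fin 2)` to `ℝ × ℝ` (whose product metric is the sup
metric `d̄((a,b),(a',b')) = max (|a−a'|) (|b−b'|)`), there exist `ε > 0` and `R > 0` such
that for every compact `C ⊆ ℝ²` there is a subset `B ⊆ ℝ² \ C` of Euclidean diameter
less than `R` whose image has `d̄`-diameter at least `ε`. -/
theorem not_controlled_compactification_plane :
    ∃ ε : ℝ, 0 < ε ∧ ∃ R : ℝ, 0 < R ∧
      ∀ C : Set (EuclideanSpace ℝ (Fin 2)), IsCompact C →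
        ∃ B : Set (EuclideanSpace ℝ (Fin 2)), B ⊆ Cᶜ ∧
          EMetric.diam B < ENNReal.ofReal R ∧
          ε ≤ Metric.diam
            ((fun x : EuclideanSpace ℝ (Fin 2) =>
              ((x 0 / (1 + |x 0|), x 1 / (1 + |x 1|)) : ℝ × ℝ)) '' B) := by
  refine ⟨1/2, by norm_num, 2, by norm_num, fun C hC => ?_⟩
  obtain ⟨r, hr⟩ := hC.isBounded.subset_closedBall 0
  set n : ℝ := max r 0 + 1 with hn
  have hn0 : 0 < n := lt_of_le_of_lt (le_max_right r 0) (by linarith [le_refl (max r 0)])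
  have hrn : r < n := lt_of_le_of_lt (le_max_left r 0) (by linarith)
  set p : EuclideanSpace ℝ (Fin 2) := (WithLp.equiv 2 (Fin 2 → ℝ)).symm ![n, 0] with hp
  set q : EuclideanSpace ℝ (Fin 2) := (WithLp.equiv 2 (Fin 2 → ℝ)).symm ![n, 1] with hq
  have hp0 : p 0 = n := rfl
  have hp1 : p 1 = 0 := rfl
  have hq0 : q 0 = n := rfl
  have hq1 : q 1 = 1 := rfl
  have hpnorm : n ≤ ‖p‖ := by
    rw [EuclideanSpace.norm_eq]
    have : (∑ i : Fin 2, ‖p i‖ ^ 2) = n ^ 2 := by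
      simp [Fin.sum_univ_two, hp0, hp1, abs_of_pos hn0]
    rw [this, Real.sqrt_sq hn0.le]
  have hqnorm : n ≤ ‖q‖ := by
    rw [EuclideanSpace.norm_eq]
    have h2 : n ^ 2 ≤ (∑ i : Fin 2, ‖q i‖ ^ 2) := by
      simp [Fin.sum_univ_two, hq0, hq1, abs_of_pos hn0]
    calc n = Real.sqrt (n ^ 2) := (Real.sqrt_sq hn0.le).symm
    _ ≤ _ := Real.sqrt_le_sqrt h2
  have hdist : dist p q = 1 := by
    rw [EuclideanSpace.dist_eq]
    have : (∑ i : Fin 2, dist (p i) (q i) ^ 2) = 1 := by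
      simp [Fin.sum_univ_two, hp0, hp1, hq0, hq1]
    rw [this, Real.sqrt_one]
  refine ⟨{p, q}, ?_, ?_, ?_⟩
  · intro x hx
    simp only [Set.mem_insert_iff, Set.mem_singleton_iff] at hx
    intro hxC
    have := hr hxC
    rw [Metric.mem_closedBall, dist_zero_right] at this
    rcases hx with rfl | rfl
    · exact absurd this (not_le.mpr (lt_of_lt_of_le hrn hpnorm))
    · exact absurd this (not_le.mpr (lt_of_lt_of_le hrn hqnorm))
  · rw [show EMetric.diam ({p, q} : Set (EuclideanSpace ℝ (Fin 2))) = edist p q from EMetric.diam_pair, edist_dist, hdist]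
    exact ENNReal.ofReal_lt_ofReal_iff_of_nonneg (by norm_num) |>.mpr (by norm_num)
  · rw [Set.image_pair]
    rw [Metric.diam_pair]
    simp only [hp0, hp1, hq0, hq1]
    rw [Prod.dist_eq]
    simp only [Real.dist_eq]
    have : |n / (1 + |n|) - n / (1 + |n|)| = 0 := by simp
    rw [this]
    have h1 : |(0:ℝ) / (1 + |(0:ℝ)|) - 1 / (1 + |(1:ℝ)|)| = 1/2 := by norm_num
    rw [h1]
    simp
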